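/- arXiv:2006.01558 — 2 statements merged into one kernel-verified Lean document; each statement's English description precedes it below -/
import Mathlib

section
/- Closedness of touching points: Let θ⁺, θ⁻ ∈ ℝ with θ⁺ − θ⁻ ∈ 𝒢_𝔸, let τ⁺, τ⁻ ∈ ℝ², and let (τ⁺_n)_n, (τ⁻_n)_n ⊂ ℝ² with τ⁺_n → τ⁺ and τ⁻_n → τ⁻. For x ∈ 𝓛(θ⁺,τ⁺,1) and y ∈ 𝓛(θ⁻,τ⁻,1) set x_n := x + e^{iθ⁺}(τ⁺_n − τ⁺) ∈ 𝓛(θ⁺,τ⁺_n,1) and y_n := y + e^{iθ⁻}(τ⁻_n − τ⁻) ∈ 𝓛(θ⁻,τ⁻_n,1). Then there exists n₀ ∈ ℕ such that for all n ≥ n₀ and for ALL x ∈ 𝓛(θ⁺,τ⁺,1) and y ∈ 𝓛(θ⁻,τ⁻,1): (i) |x − y| < 1 implies |x_n − y_n| < 1, and (ii) |x − y| > 1 implies |x_n − y_n| > 1. In particular, if |x_n − y_n| = 1 for some n ≥ n₀, then |x − y| = 1. -/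
open Filter Set

noncomputable section

namespace HeitmannRadin

/-- The rotation `e^{iθ}` as a complex number. -/
def rot (θ : ℝ) : ℂ := Complex.exp ((θ : ℂ) * Complex.I)

/-- `ω = 1/2 + (√3/2) i`. -/
def omega : ℂ := 1 / 2 + (Real.sqrt 3 / 2 : ℝ) * Complex.I

/-- The triangular lattice `𝓛 = {p + qω : p, q ∈ ℤ}`. -/
def Lat : Set ℂ := {z : ℂ | ∃ p q : ℤ, z = (p : ℂ) + (q : ℂ) * omega}

/-- A lattice isometry: `none` is the vacuum `𝟎`, `some (θ, τ)` is the triple `(θ, τ, 1)`. -/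
abbrev LatIso := Option (ℝ × ℂ)

/-- The lattice `𝓛(z)` of a lattice isometry: `𝓛(θ,τ,1) = e^{iθ}(𝓛 + τ)`, `𝓛(𝟎) = ∅`. -/
def latt : LatIso → Set ℂ
  | none => ∅
  | some z => (fun v => rot z.1 * (v + z.2)) '' Lat

/-- The scaled lattice `ε𝓛(z)`. -/
def scaledLatt (ε : ℝ) (z : LatIso) : Set ℂ := (fun v => (ε : ℂ) * v) '' latt z

/-- A finite configuration is ε-admissible if distinct points have mutual distance ≥ ε. -/
def Admissible (ε : ℝ) (X : Finset ℂ) : Prop :=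
  ∀ x ∈ X, ∀ y ∈ X, x ≠ y → ε ≤ dist x y

/-- The number of ε-neighbors `#𝒩_ε(x)` of `x` in the configuration `X`. -/
def nbhd (ε : ℝ) (X : Finset ℂ) (x : ℂ) : ℕ :=
  {y ∈ (X : Set ℂ) | dist x y = ε}.ncard

/-- The localized energy `E_ε(X, B) = (1/2)∑_{x ∈ X ∩ B} ε(6 − #𝒩_ε(x))`. -/
def energy (ε : ℝ) (X : Finset ℂ) (B : Set ℂ) : ℝ :=
  (1 / 2) * ∑ x ∈ X, B.indicator (fun _ => ε * (6 - (nbhd ε X x : ℝ))) x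

/-- `ν` rotated clockwise by `π/2`. -/
def perp (ν : ℂ) : ℂ := -Complex.I * ν

/-- The inner product of `ℝ²` read through `ℂ`. -/
def rinner (w v : ℂ) : ℝ := (w * (starRingEnd ℂ) v).re

/-- The half-open unit cube `Q^ν`. -/
def Qunit (ν : ℂ) : Set ℂ :=
  {w : ℂ | -(1 / 2) ≤ rinner w ν ∧ rinner w ν < 1 / 2 ∧
    -(1 / 2) ≤ rinner w (perp ν) ∧ rinner w (perp ν) < 1 / 2}

/-- The scaled cube `r Q^ν` (centered at the origin). -/
def Qs (ν : ℂ) (r : ℝ) : Set ℂ := (fun u => (r : ℂ) * u) '' Qunit ν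

/-- The cube `Q^ν_ρ(x₀) = x₀ + ρ Q^ν`. -/
def Qc (ν : ℂ) (ρ : ℝ) (x₀ : ℂ) : Set ℂ := (fun u => x₀ + u) '' Qs ν ρ

/-- The boundary regions `∂^±_ε Q^ν_ρ(x₀)`; `true` stands for `+`, `false` for `−`. -/
def bdry (ε : ℝ) (ν : ℂ) (ρ : ℝ) (x₀ : ℂ) (s : Bool) : Set ℂ :=
  (fun u => x₀ + u) ''
    {w ∈ closure (Qs ν (ρ + 10 * ε) \ Qs ν (ρ - 10 * ε)) |
      5 * ε ≤ if s then rinner ν w else -(rinner ν w)}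

/-- The boundary conditions `X = ε𝓛(z⁺)` on `∂⁺_ε Q^ν_ρ(x₀)` and `X = ε𝓛(z⁻)` on
`∂⁻_ε Q^ν_ρ(x₀)`. -/
def BC (ε : ℝ) (ν : ℂ) (ρ : ℝ) (x₀ : ℂ) (zp zm : LatIso) (X : Finset ℂ) : Prop :=
  (X : Set ℂ) ∩ bdry ε ν ρ x₀ true = scaledLatt ε zp ∩ bdry ε ν ρ x₀ true ∧
  (X : Set ℂ) ∩ bdry ε ν ρ x₀ false = scaledLatt ε zm ∩ bdry ε ν ρ x₀ false

/-- The minimal cell energy `m_ε(z⁺,z⁻,ν,ρ,x₀)`. -/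
def mVal (ε : ℝ) (zp zm : LatIso) (ν : ℂ) (ρ : ℝ) (x₀ : ℂ) : ℝ :=
  sInf {e : ℝ | ∃ X : Finset ℂ, Admissible ε X ∧ BC ε ν ρ x₀ zp zm X ∧
    e = energy ε X (Qc ν ρ x₀)}

/-- The cell energy infimized also over the centers (at lattice spacing 1). -/
def cellInf (zp zm : LatIso) (ν : ℂ) (T : ℝ) : ℝ :=
  sInf {e : ℝ | ∃ (y : ℂ) (X : Finset ℂ), Admissible 1 X ∧ BC 1 ν T y zp zm X ∧
    e = energy 1 X (Qc ν T y)}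

/-- The density `φ̄(z⁺,z⁻,ν)`. -/
def phiBar (zp zm : LatIso) (ν : ℂ) : ℝ :=
  Filter.liminf (fun T : ℝ => (1 / T) * cellInf zp zm ν T) Filter.atTop

/-- The hexagonal density `φ_hex(ξ) = (2/√3)∑_{k=1}^{3}|⟨ξ, ω^k⟩|`. -/
def phiHex (ξ : ℂ) : ℝ := (2 / Real.sqrt 3) * ∑ k ∈ Finset.range 3, |rinner ξ (omega ^ (k + 1))|

/-- The set of good angles `𝒢_𝔸`. -/
def goodAngle (θ : ℝ) : Prop :=
  ∃ v₁ ∈ Lat, ∃ v₂ ∈ Lat, v₁ ≠ 0 ∧ v₂ ≠ 0 ∧ rot θ = v₁ / v₂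

/-- Convergence of angles modulo `π/3` as `T → +∞`. -/
def ModAngleTendsto (f : ℝ → ℝ) (θ : ℝ) : Prop :=
  ∃ k : ℝ → ℤ, Filter.Tendsto (fun T => f T - θ - Real.pi / 3 * (k T : ℝ)) Filter.atTop (nhds 0)

/-- Convergence of translations modulo `𝓛` as `T → +∞`. -/
def ModLatTendsto (f : ℝ → ℂ) (τ : ℂ) : Prop :=
  ∃ v : ℝ → ℂ, (∀ T, v T ∈ Lat) ∧ Filter.Tendsto (fun T => f T - τ - v T) Filter.atTop (nhds 0)

/-- Convergence in the state space `𝒵`. -/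
def ZTendsto (f : ℝ → LatIso) : LatIso → Prop
  | none => ∀ᶠ T in Filter.atTop, f T = none
  | some z => ∃ (θf : ℝ → ℝ) (τf : ℝ → ℂ), (∀ᶠ T in Filter.atTop, f T = some (θf T, τf T)) ∧
      ModAngleTendsto θf z.1 ∧ ModLatTendsto τf z.2

/-- The cell formula `Φ(z⁺,z⁻,ν)` with converging boundary values. -/
def PhiVal (zp zm : LatIso) (ν : ℂ) : ℝ :=
  sInf {L : ℝ | ∃ fp fm : ℝ → LatIso, ZTendsto fp zp ∧ ZTendsto fm zm ∧
    L = Filter.liminf (fun T : ℝ => (1 / T) * cellInf (fp T) (fm T) ν T) Filter.atTop}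

/-- Two points of `Y` are joined by a chain in `Y` with consecutive distances 1. -/
def Chain (Y : Set ℂ) (x y : ℂ) : Prop :=
  ∃ (n : ℕ) (v : ℕ → ℂ), v 0 = x ∧ v n = y ∧ (∀ i ≤ n, v i ∈ Y) ∧
    ∀ i < n, dist (v i) (v (i + 1)) = 1

/-- A configuration is connected if all pairs of its points are joined by chains. -/
def ConnectedConf (Y : Set ℂ) : Prop := ∀ x ∈ Y, ∀ y ∈ Y, Chain Y x y

/-- A configuration is strongly connected if moreover removing any point keeps it connected. -/
def StronglyConnectedConf (Y : Set ℂ) : Prop :=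
  ConnectedConf Y ∧ ∀ x ∈ Y, ConnectedConf (Y \ {x})

open Classical in
/-- The boundary `∂Y` of `Y` inside `Q`. -/
def confBdry (Y : Finset ℂ) (Q : Set ℂ) : Finset ℂ :=
  Y.filter fun x => x ∈ Q ∧ {y' ∈ (Y : Set ℂ) | dist x y' = 1}.ncard < 6

/-- The maximal component `M^±` of strongly connected subsets of `X ∩ 𝓛(z)` meeting the
boundary region on side `s`. -/
def maxComp (X : Finset ℂ) (z : LatIso) (ν : ℂ) (T : ℝ) (y : ℂ) (s : Bool) : Set ℂ :=
  {x : ℂ | ∃ Z : Set ℂ, Z ⊆ (X : Set ℂ) ∩ latt z ∧ (Z ∩ bdry 1 ν T y s).Nonempty ∧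
    StronglyConnectedConf Z ∧ x ∈ Z}



lemma omega_sq : omega ^ 2 = omega - 1 := by
  have hs : (Real.sqrt 3 : ℂ) ^ 2 = 3 := by
    norm_cast
    rw [Real.sq_sqrt]
    norm_num
  have hI : Complex.I ^ 2 = -1 := Complex.I_sq
  unfold omega
  push_cast
  linear_combination (Real.sqrt 3 : ℂ) ^ 2 / 4 * hI - (1 / 4 : ℂ) * hs

lemma mul_mem_Lat {a b : ℂ} (ha : a ∈ Lat) (hb : b ∈ Lat) : a * b ∈ Lat := by
  obtain ⟨p, q, rfl⟩ := ha
  obtain ⟨p', q', rfl⟩ := hb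
  refine ⟨p * p' - q * q', p * q' + q * p' + q * q', ?_⟩
  push_cast
  linear_combination ((q : ℂ) * q') * omega_sq

lemma sub_mem_Lat {a b : ℂ} (ha : a ∈ Lat) (hb : b ∈ Lat) : a - b ∈ Lat := by
  obtain ⟨p, q, rfl⟩ := ha
  obtain ⟨p', q', rfl⟩ := hb
  exact ⟨p - p', q - q', by push_cast; ring⟩

lemma omega_re : omega.re = 1 / 2 := by simp [omega]
lemma omega_im : omega.im = Real.sqrt 3 / 2 := by simp [omega]

lemma abs_rot (θ : ℝ) : ‖rot θ‖ = 1 := Complex.norm_exp_ofReal_mul_I θ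

lemma rot_sub_eq (a b : ℝ) : rot (a - b) = rot a / rot b := by
  unfold rot
  rw [← Complex.exp_sub]
  congr 1
  push_cast
  ring

lemma Lat_ball_finite (R : ℝ) : {w : ℂ | w ∈ Lat ∧ ‖w‖ ≤ R}.Finite := by
  have h3 : (1 : ℝ) ≤ Real.sqrt 3 := by
    rw [show (1:ℝ) = Real.sqrt 1 by simp]
    exact Real.sqrt_le_sqrt (by norm_num)
  apply Set.Finite.subset (((Set.finite_Icc (-⌈2*R⌉) ⌈2*R⌉).prod
    (Set.finite_Icc (-⌈2*R⌉) ⌈2*R⌉)).image (fun pq : ℤ × ℤ => (pq.1 : ℂ) + pq.2 * omega))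
  rintro w ⟨⟨p, q, rfl⟩, hw⟩
  have hre : ((p : ℂ) + q * omega).re = p + q * (1/2) := by
    simp [Complex.add_re, Complex.mul_re, omega_re, omega_im]
  have him : ((p : ℂ) + q * omega).im = q * (Real.sqrt 3 / 2) := by
    simp [Complex.add_im, Complex.mul_im, omega_re, omega_im]
  have h1 : |((p : ℂ) + q * omega).re| ≤ R := (Complex.abs_re_le_norm _).trans hw
  have h2 : |((p : ℂ) + q * omega).im| ≤ R := (Complex.abs_im_le_norm _).trans hw
  rw [hre] at h1
  rw [him, abs_mul] at h2
  have hq : |(q : ℝ)| ≤ 2 * R := by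
    have : |(Real.sqrt 3 / 2)| = Real.sqrt 3 / 2 := abs_of_nonneg (by positivity)
    rw [this] at h2
    nlinarith [abs_nonneg (q : ℝ)]
  have hp : |(p : ℝ)| ≤ 2 * R := by
    have h' : |(p : ℝ)| ≤ |((p:ℝ) + q * (1/2))| + |(q:ℝ) * (1/2)| := by
      calc |(p : ℝ)| = |((p:ℝ) + q * (1/2)) - (q:ℝ) * (1/2)| := by ring_nf
        _ ≤ _ := abs_sub _ _
    rw [abs_mul, show |(1/2 : ℝ)| = 1/2 by norm_num] at h'
    linarith
  have hceil : (2*R : ℝ) ≤ (⌈2*R⌉ : ℝ) := Int.le_ceil _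
  refine ⟨(p, q), ⟨⟨?_, ?_⟩, ?_, ?_⟩, rfl⟩
  · have h' : ((-⌈2*R⌉ : ℤ) : ℝ) ≤ (p : ℝ) := by
      push_cast; linarith [neg_le_of_abs_le hp]
    exact_mod_cast h'
  · have h' : (p : ℝ) ≤ ((⌈2*R⌉ : ℤ) : ℝ) := by linarith [le_of_abs_le hp]
    exact_mod_cast h'
  · have h' : ((-⌈2*R⌉ : ℤ) : ℝ) ≤ (q : ℝ) := by
      push_cast; linarith [neg_le_of_abs_le hq]
    exact_mod_cast h'
  · have h' : (q : ℝ) ≤ ((⌈2*R⌉ : ℤ) : ℝ) := by linarith [le_of_abs_le hq]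
    exact_mod_cast h'

lemma exists_gap (c : ℂ) (r : ℝ) (hr : 0 < r) :
    ∃ δ > 0, ∀ w ∈ Lat,
      (‖w + c‖ / r < 1 → ‖w + c‖ / r ≤ 1 - δ) ∧
      (1 < ‖w + c‖ / r → 1 + δ ≤ ‖w + c‖ / r) := by
  set B := 2 * r + ‖c‖ with hB
  set S := {d : ℝ | ∃ w, w ∈ Lat ∧ ‖w‖ ≤ B ∧ d = ‖w + c‖ / r ∧ d ≠ 1}
    with hS
  have hSfin : S.Finite := by
    apply Set.Finite.subset ((Lat_ball_finite B).image (fun w => ‖w + c‖ / r))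
    rintro d ⟨w, hw, hwb, rfl, -⟩
    exact ⟨w, ⟨hw, hwb⟩, rfl⟩
  have hHfin : ((fun d => |d - 1|) '' S).Finite := hSfin.image _
  set H := (fun d => |d - 1|) '' S with hH
  have hmemS : ∀ w ∈ Lat, ‖w + c‖ / r ≠ 1 → ‖w + c‖ / r ≤ 2 →
      ‖w + c‖ / r ∈ S := by
    intro w hw hne1 hle2
    refine ⟨w, hw, ?_, rfl, hne1⟩
    have h2r : ‖w + c‖ ≤ 2 * r := by rw [div_le_iff₀ hr] at hle2; linarith
    have htri : ‖w‖ ≤ ‖w + c‖ + ‖c‖ := by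
      calc ‖w‖ = ‖w + c + -c‖ := by congr 1; ring
        _ ≤ ‖w + c‖ + ‖-c‖ := norm_add_le _ _
        _ = ‖w + c‖ + ‖c‖ := by rw [norm_neg]
    linarith
  by_cases hne : H.Nonempty
  · have hmem : sInf H ∈ H := hne.csInf_mem hHfin
    obtain ⟨d, hd, hdeq⟩ := hmem
    have hdpos : 0 < |d - 1| := by
      obtain ⟨w, -, -, -, hne1⟩ := hd
      exact abs_pos.mpr (sub_ne_zero.mpr hne1)
    refine ⟨min (1/2) (sInf H), lt_min (by norm_num) (hdeq ▸ hdpos), ?_⟩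
    intro w hw
    set e := ‖w + c‖ / r with he
    have hkey : e ≠ 1 → e ≤ 2 → min (1/2) (sInf H) ≤ |e - 1| := fun hne1 hle2 =>
      (min_le_right _ _).trans (csInf_le hHfin.bddBelow ⟨e, hmemS w hw hne1 hle2, rfl⟩)
    constructor
    · intro hlt
      have h := hkey (ne_of_lt hlt) (by linarith)
      rw [abs_of_nonpos (by linarith)] at h
      linarith
    · intro hgt
      by_cases hle2 : e ≤ 2
      · have h := hkey (ne_of_gt hgt) hle2
        rw [abs_of_nonneg (by linarith)] at h
        linarith
      · have : min (1/2) (sInf H) ≤ 1/2 := min_le_left _ _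
        linarith
  · refine ⟨1/2, by norm_num, fun w hw => ⟨?_, ?_⟩⟩
    · intro hlt
      exact absurd ⟨_, Set.mem_image_of_mem _ (hmemS w hw (ne_of_lt hlt) (by linarith))⟩ hne
    · intro hgt
      by_cases hle2 : ‖w + c‖ / r ≤ 2
      · exact absurd ⟨_, Set.mem_image_of_mem _ (hmemS w hw (ne_of_gt hgt) hle2)⟩ hne
      · linarith


/-- Closedness of touching points. -/
theorem closedness_of_touching_points (θp θm : ℝ) (hgood : goodAngle (θp - θm))
    (τp τm : ℂ) (τpn τmn : ℕ → ℂ)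
    (hp : Filter.Tendsto τpn Filter.atTop (nhds τp))
    (hm : Filter.Tendsto τmn Filter.atTop (nhds τm)) :
    ∃ n₀ : ℕ, ∀ n ≥ n₀, ∀ x ∈ latt (some (θp, τp)), ∀ y ∈ latt (some (θm, τm)),
      (dist x y < 1 →
        dist (x + rot θp * (τpn n - τp)) (y + rot θm * (τmn n - τm)) < 1) ∧
      (1 < dist x y →
        1 < dist (x + rot θp * (τpn n - τp)) (y + rot θm * (τmn n - τm))) ∧
      (dist (x + rot θp * (τpn n - τp)) (y + rot θm * (τmn n - τm)) = 1 →
        dist x y = 1) := by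
  obtain ⟨v1, hv1, v2, hv2, hv1ne, hv2ne, hrot⟩ := hgood
  have hkey : rot θp * v2 = rot θm * v1 := by
    rw [rot_sub_eq] at hrot
    have hrm : rot θm ≠ 0 := Complex.exp_ne_zero _
    field_simp at hrot
    linear_combination hrot
  have hr : (0 : ℝ) < ‖v2‖ := norm_pos_iff.mpr hv2ne
  obtain ⟨δ, hδ, hgap⟩ := exists_gap (v1 * τp - v2 * τm) (‖v2‖) hr
  have hdist : ∀ a b tp tm : ℂ,
      dist (rot θp * (a + tp)) (rot θm * (b + tm)) =
        ‖(v1 * a - v2 * b) + (v1 * tp - v2 * tm)‖ / ‖v2‖ := by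
    intro a b tp tm
    have hmul : (rot θp * (a + tp) - rot θm * (b + tm)) * v2 =
        rot θm * ((v1 * a - v2 * b) + (v1 * tp - v2 * tm)) := by
      linear_combination (a + tp) * hkey
    have habs := congrArg norm hmul
    rw [norm_mul, norm_mul, abs_rot, one_mul] at habs
    rw [Complex.dist_eq, eq_div_iff (ne_of_gt hr)]
    exact habs
  have h1 : ∀ᶠ n in Filter.atTop, dist (τpn n) τp < δ / 2 :=
    Metric.tendsto_nhds.mp hp (δ / 2) (by positivity)
  have h2 : ∀ᶠ n in Filter.atTop, dist (τmn n) τm < δ / 2 :=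
    Metric.tendsto_nhds.mp hm (δ / 2) (by positivity)
  obtain ⟨n₀, hn₀⟩ := Filter.eventually_atTop.mp (h1.and h2)
  refine ⟨n₀, fun n hn x hx y hy => ?_⟩
  obtain ⟨hp1, hp2⟩ := hn₀ n hn
  obtain ⟨a, ha, rfl⟩ := hx
  obtain ⟨b, hb, rfl⟩ := hy
  simp only at *
  have hwLat : (v1 * a - v2 * b) ∈ Lat :=
    sub_mem_Lat (mul_mem_Lat hv1 ha) (mul_mem_Lat hv2 hb)
  have hD : dist (rot θp * (a + τp)) (rot θm * (b + τm)) =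
      ‖(v1 * a - v2 * b) + (v1 * τp - v2 * τm)‖ / ‖v2‖ := hdist a b τp τm
  have hgapd := hgap (v1 * a - v2 * b) hwLat
  rw [← hD] at hgapd
  set x := rot θp * (a + τp) with hx'
  set y := rot θm * (b + τm) with hy'
  set xn := x + rot θp * (τpn n - τp) with hxn
  set yn := y + rot θm * (τmn n - τm) with hyn
  have hdx : dist x xn = dist (τpn n) τp := by
    rw [Complex.dist_eq, Complex.dist_eq]
    have : x - xn = rot θp * (τp - τpn n) := by rw [hxn]; ring
    rw [this, norm_mul, abs_rot, one_mul, norm_sub_rev]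
  have hdy : dist y yn = dist (τmn n) τm := by
    rw [Complex.dist_eq, Complex.dist_eq]
    have : y - yn = rot θm * (τm - τmn n) := by rw [hyn]; ring
    rw [this, norm_mul, abs_rot, one_mul, norm_sub_rev]
  have herr : |dist xn yn - dist x y| < δ := by
    have h4 := dist_dist_dist_le x y xn yn
    rw [Real.dist_eq, hdx, hdy, abs_sub_comm] at h4
    calc |dist xn yn - dist x y| ≤ dist (τpn n) τp + dist (τmn n) τm := h4
      _ < δ / 2 + δ / 2 := by exact add_lt_add hp1 hp2
      _ = δ := by ring
  have habs1 : dist xn yn - dist x y < δ := lt_of_le_of_lt (le_abs_self _) herr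
  have habs2 : dist x y - dist xn yn < δ := by
    have := lt_of_le_of_lt (neg_abs_le _) herr
    linarith [neg_abs_le (dist xn yn - dist x y)]
  have hi : dist x y < 1 → dist xn yn < 1 := by
    intro hlt
    have := hgapd.1 hlt
    linarith
  have hii : 1 < dist x y → 1 < dist xn yn := by
    intro hgt
    have := hgapd.2 hgt
    linarith
  refine ⟨hi, hii, ?_⟩
  intro heq
  rcases lt_trichotomy (dist x y) 1 with h | h | h
  · exact absurd heq (ne_of_lt (hi h))
  · exact h
  · exact absurd heq.symm (ne_of_lt (hii h))

end HeitmannRadin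
end
end

section
/- Translational invariance of the surface energy density (Theorem 'Properties of φ'(v)): For all θ⁺, θ⁻ ∈ ℝ, all τ⁺, τ⁻ ∈ ℝ², all ν ∈ S¹ and all τ ∈ ℝ² one has φ̄((θ⁺, τ⁺ + e^{−iθ⁺}τ, 1), (θ⁻, τ⁻ + e^{−iθ⁻}τ, 1), ν) = φ̄((θ⁺, τ⁺, 1), (θ⁻, τ⁻, 1), ν). -/
open Filter Set

noncomputable section

namespace HeitmannRadin

/-- Translation embedding. -/
def tEmb (τ : ℂ) : ℂ ↪ ℂ := ⟨fun x => x + τ, add_left_injective τ⟩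

@[simp] lemma tEmb_apply (τ x : ℂ) : tEmb τ x = x + τ := rfl

lemma rot_mul_rot_neg (θ : ℝ) : rot θ * rot (-θ) = 1 := by
  rw [rot, rot, ← Complex.exp_add,
    show ((θ : ℂ) * Complex.I + ((-θ : ℝ) : ℂ) * Complex.I) = 0 by push_cast; ring,
    Complex.exp_zero]

lemma latt_translate (θ : ℝ) (τ₀ τ : ℂ) :
    latt (some (θ, τ₀ + rot (-θ) * τ)) = (fun w => w + τ) '' latt (some (θ, τ₀)) := by
  simp only [latt, Set.image_image]
  apply Set.image_congr'
  intro v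
  have h := rot_mul_rot_neg θ
  calc rot θ * (v + (τ₀ + rot (-θ) * τ))
      = rot θ * (v + τ₀) + rot θ * rot (-θ) * τ := by ring
    _ = rot θ * (v + τ₀) + τ := by rw [h, one_mul]

lemma scaledLatt_one (z : LatIso) : scaledLatt 1 z = latt z := by
  simp [scaledLatt]

lemma bdry_translate (ν : ℂ) (T : ℝ) (y τ : ℂ) (s : Bool) :
    bdry 1 ν T (y + τ) s = (fun w => w + τ) '' bdry 1 ν T y s := by
  simp only [bdry, Set.image_image]
  apply Set.image_congr'
  intro u
  ring

lemma Qc_translate (ν : ℂ) (T : ℝ) (y τ : ℂ) :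
    Qc ν T (y + τ) = (fun w => w + τ) '' Qc ν T y := by
  simp only [Qc, Set.image_image]
  apply Set.image_congr'
  intro u
  ring

lemma nbhd_translate (X : Finset ℂ) (x τ : ℂ) :
    nbhd 1 (X.map (tEmb τ)) (x + τ) = nbhd 1 X x := by
  unfold nbhd
  have hset : {y ∈ ((X.map (tEmb τ)) : Set ℂ) | dist (x + τ) y = 1}
      = (fun w => w + τ) '' {y ∈ (X : Set ℂ) | dist x y = 1} := by
    rw [Finset.coe_map]
    ext y'
    constructor
    · rintro ⟨⟨a, ha, rfl⟩, hd⟩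
      exact ⟨a, ⟨ha, by rwa [tEmb_apply, dist_add_right] at hd⟩, rfl⟩
    · rintro ⟨a, ⟨ha, hd⟩, rfl⟩
      exact ⟨⟨a, ha, rfl⟩, by rwa [dist_add_right]⟩
  rw [hset, Set.ncard_image_of_injective _ (add_left_injective τ)]

lemma energy_translate (X : Finset ℂ) (ν : ℂ) (T : ℝ) (y τ : ℂ) :
    energy 1 (X.map (tEmb τ)) (Qc ν T (y + τ)) = energy 1 X (Qc ν T y) := by
  unfold energy
  rw [Finset.sum_map]
  congr 1
  apply Finset.sum_congr rfl
  intro a _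
  have hm : (a + τ ∈ Qc ν T (y + τ)) ↔ a ∈ Qc ν T y := by
    rw [Qc_translate]
    exact (add_left_injective τ).mem_set_image
  have hn : nbhd 1 (X.map (tEmb τ)) (a + τ) = nbhd 1 X a := nbhd_translate X a τ
  simp only [tEmb_apply, hn]
  by_cases h : a ∈ Qc ν T y
  · rw [Set.indicator_of_mem (hm.mpr h), Set.indicator_of_mem h]
  · rw [Set.indicator_of_notMem (fun hc => h (hm.mp hc)),
      Set.indicator_of_notMem h]

lemma admissible_translate (X : Finset ℂ) (τ : ℂ) (h : Admissible 1 X) :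
    Admissible 1 (X.map (tEmb τ)) := by
  intro x hx y hy hne
  rw [Finset.mem_map] at hx hy
  obtain ⟨a, ha, rfl⟩ := hx
  obtain ⟨b, hb, rfl⟩ := hy
  simp only [tEmb_apply] at hne ⊢
  rw [dist_add_right]
  exact h a ha b hb (fun hab => hne (by rw [hab]))

lemma cellSet_subset (θp θm : ℝ) (τp τm τ : ℂ) (ν : ℂ) (T : ℝ) :
    {e : ℝ | ∃ (y : ℂ) (X : Finset ℂ), Admissible 1 X ∧
        BC 1 ν T y (some (θp, τp)) (some (θm, τm)) X ∧ e = energy 1 X (Qc ν T y)} ⊆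
    {e : ℝ | ∃ (y : ℂ) (X : Finset ℂ), Admissible 1 X ∧
        BC 1 ν T y (some (θp, τp + rot (-θp) * τ)) (some (θm, τm + rot (-θm) * τ)) X ∧
        e = energy 1 X (Qc ν T y)} := by
  rintro e ⟨y, X, hA, hBC, rfl⟩
  refine ⟨y + τ, X.map (tEmb τ), admissible_translate X τ hA, ?_, (energy_translate X ν T y τ).symm⟩
  have hXset : ((X.map (tEmb τ)) : Set ℂ) = (fun w => w + τ) '' (X : Set ℂ) := by
    rw [Finset.coe_map]; rfl
  have hinj : Function.Injective (fun w : ℂ => w + τ) := add_left_injective τ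
  constructor
  · rw [hXset, bdry_translate, scaledLatt_one, latt_translate, ← Set.image_inter hinj,
      ← Set.image_inter hinj]
    exact congrArg _ (by rw [← scaledLatt_one (some (θp, τp))]; exact hBC.1)
  · rw [hXset, bdry_translate, scaledLatt_one, latt_translate, ← Set.image_inter hinj,
      ← Set.image_inter hinj]
    exact congrArg _ (by rw [← scaledLatt_one (some (θm, τm))]; exact hBC.2)

lemma cellInf_translate (θp θm : ℝ) (τp τm τ : ℂ) (ν : ℂ) (T : ℝ) :
    cellInf (some (θp, τp + rot (-θp) * τ)) (some (θm, τm + rot (-θm) * τ)) ν T =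
      cellInf (some (θp, τp)) (some (θm, τm)) ν T := by
  unfold cellInf
  congr 1
  apply Set.Subset.antisymm
  · have h := cellSet_subset θp θm (τp + rot (-θp) * τ) (τm + rot (-θm) * τ) (-τ) ν T
    have hp : (τp + rot (-θp) * τ) + rot (-θp) * (-τ) = τp := by ring
    have hm : (τm + rot (-θm) * τ) + rot (-θm) * (-τ) = τm := by ring
    rwa [hp, hm] at h
  · exact cellSet_subset θp θm τp τm τ ν T

/-- Translational invariance of the surface energy density. -/
theorem surface_energy_translation_invariant (θp θm : ℝ) (τp τm τ : ℂ)
    (ν : ℂ) (hν : ‖ν‖ = 1) :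
    phiBar (some (θp, τp + rot (-θp) * τ)) (some (θm, τm + rot (-θm) * τ)) ν =
      phiBar (some (θp, τp)) (some (θm, τm)) ν := by
  unfold phiBar
  congr 1
  funext T
  rw [cellInf_translate]

end HeitmannRadin
end
end
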